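/- Let N ≥ 1 and consider a hidden variable model given by a joint conditional distribution P_{XYUV|AB} with binary outcomes X, Y ∈ {0,1}, inputs A ∈ {0,2,...,2N−2}, B ∈ {1,3,...,2N−1}, and hidden variables U, V in finite sets. Assume: (i) the hidden variables are independent of the inputs, i.e. the marginal P_{UV|A=a,B=b} equals a fixed distribution P_{UV} for all a, b; (ii) locality of the local parts, i.e. the marginal P_{X|A=a,B=b,U=u,V=v} depends only on a and u, and the marginal P_{Y|A=a,B=b,U=u,V=v} depends only on b and v. Then for all inputs a and b: D(P_{XU|A=a}, U_X × P_U) ≤ I_N/2 and D(P_{YV|B=b}, U_Y × P_V) ≤ I_N/2, where I_N is the chained Bell quantity of the bipartite marginal P_{XY|AB}, U_X and U_Y are uniform on {0,1}, and P_U, P_V are the marginals of P_{UV}. -/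

import Mathlib

open Finset

noncomputable section

/-- `P` is a probability distribution on the finite set `S`. -/
def IsProbDist {S : Type*} [Fintype S] (P : S → ℝ) : Prop :=
  (∀ x, 0 ≤ P x) ∧ ∑ x, P x = 1

/-- The statistical distance `D(P,Q) = (1/2) ∑_x |P x - Q x|`. -/
def statDist {S : Type*} [Fintype S] (P Q : S → ℝ) : ℝ :=
  (1 / 2) * ∑ x, |P x - Q x|

/-- The chained Bell quantity `I_N` of a bipartite conditional distribution.
Alice's input `a : Fin N` stands for the measurement `2a ∈ {0,2,…,2N-2}` and Bob's input
`b : Fin N` stands for `2b+1 ∈ {1,3,…,2N-1}`; thus `|2a - (2b+1)| = 1` iff `a = b ∨ a = b+1`.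
`I_N = ∑_{a,b : |a-b|=1} ∑_x P(x, x̄ | a, b) + ∑_x P(x, x | 0, 2N-1)`, where `x̄ = 1 - x`. -/
def chainedBell (N : ℕ) (hN : 0 < N) (P : Fin N → Fin N → Fin 2 → Fin 2 → ℝ) : ℝ :=
  (∑ a : Fin N, ∑ b : Fin N,
      if (a : ℕ) = (b : ℕ) ∨ (a : ℕ) = (b : ℕ) + 1 then ∑ x : Fin 2, P a b x (1 - x) else 0)
    + ∑ x : Fin 2, P ⟨0, hN⟩ ⟨N - 1, by omega⟩ x x


private def clampFin (N : ℕ) (hN : 0 < N) (i : ℕ) : Fin N := ⟨min i (N-1), by omega⟩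

private lemma clampFin_coe {N : ℕ} (hN : 0 < N) (b : Fin N) : clampFin N hN (b : ℕ) = b := by
  have := b.isLt
  ext
  simp only [clampFin]
  omega

private lemma clampFin_val_of_lt {N : ℕ} (hN : 0 < N) {i : ℕ} (h : i < N) :
    ((clampFin N hN i : Fin N) : ℕ) = i := by
  simp only [clampFin]; omega

private lemma path1 (f g : ℕ → ℝ) (k : ℕ) :
    |f 0 - f k| ≤ ∑ i ∈ Finset.range k, (|f i - g i| + |f (i+1) - g i|) := by
  induction k with
  | zero => simp
  | succ k ih =>
    rw [Finset.sum_range_succ]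
    have h1 : |f 0 - f (k+1)| ≤ |f 0 - f k| + |f k - f (k+1)| := abs_sub_le _ _ _
    have h2 : |f k - f (k+1)| ≤ |f k - g k| + |g k - f (k+1)| := abs_sub_le _ _ _
    rw [abs_sub_comm (g k)] at h2
    linarith

private lemma path2 (f g : ℕ → ℝ) (k d : ℕ) :
    |f k - g (k+d)| ≤ (∑ i ∈ Finset.Ico k (k+d+1), |f i - g i|)
      + ∑ i ∈ Finset.Ico k (k+d), |f (i+1) - g i| := by
  induction d with
  | zero =>
    rw [Finset.sum_Ico_succ_top le_rfl]
    simp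
  | succ d ih =>
    have e1 : k + (d+1) + 1 = (k + d + 1) + 1 := by omega
    have e2 : k + (d+1) = (k + d) + 1 := by omega
    rw [e1, e2, Finset.sum_Ico_succ_top (show k ≤ k+d+1 by omega) (fun i => |f i - g i|),
      Finset.sum_Ico_succ_top (show k ≤ k+d by omega) (fun i => |f (i+1) - g i|)]
    have h1 : |f k - g (k+d+1)| ≤ |f k - g (k+d)| + |g (k+d) - g (k+d+1)| := abs_sub_le _ _ _
    have h2 : |g (k+d) - g (k+d+1)| ≤ |g (k+d) - f (k+d+1)| + |f (k+d+1) - g (k+d+1)| := abs_sub_le _ _ _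
    rw [abs_sub_comm (g (k+d)) (f (k+d+1))] at h2
    linarith

private lemma path3 (f g : ℕ → ℝ) (k d : ℕ) :
    |g k - g (k+d)| ≤ (∑ i ∈ Finset.Ico (k+1) (k+d+1), |f i - g i|)
      + ∑ i ∈ Finset.Ico k (k+d), |f (i+1) - g i| := by
  induction d with
  | zero => simp
  | succ d ih =>
    have e1 : k + (d+1) + 1 = (k + d + 1) + 1 := by omega
    have e2 : k + (d+1) = (k + d) + 1 := by omega
    rw [e1, e2, Finset.sum_Ico_succ_top (show k+1 ≤ k+d+1 by omega) (fun i => |f i - g i|),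
      Finset.sum_Ico_succ_top (show k ≤ k+d by omega) (fun i => |f (i+1) - g i|)]
    have h1 : |g k - g (k+d+1)| ≤ |g k - g (k+d)| + |g (k+d) - g (k+d+1)| := abs_sub_le _ _ _
    have h2 : |g (k+d) - g (k+d+1)| ≤ |g (k+d) - f (k+d+1)| + |f (k+d+1) - g (k+d+1)| := abs_sub_le _ _ _
    rw [abs_sub_comm (g (k+d)) (f (k+d+1))] at h2
    linarith

private lemma chainF (N : ℕ) (hN : 0 < N) (f g : ℕ → ℝ) (k : ℕ) (hk : k < N) :
    2 * |f k - 1/2| ≤ (∑ i ∈ Finset.range N, |f i - g i|)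
      + (∑ i ∈ Finset.range (N-1), |f (i+1) - g i|) + |f 0 + g (N-1) - 1| := by
  obtain ⟨d, rfl⟩ : ∃ d, N = k + d + 1 := ⟨N - k - 1, by omega⟩
  have hsub : k + d + 1 - 1 = k + d := by omega
  rw [hsub]
  have hp1 := path1 f g k
  rw [Finset.sum_add_distrib] at hp1
  have hp2 := path2 f g k d
  have e1 : ∑ i ∈ Finset.range (k+d+1), |f i - g i|
      = (∑ i ∈ Finset.range k, |f i - g i|) + ∑ i ∈ Finset.Ico k (k+d+1), |f i - g i| := by
    rw [Finset.range_eq_Ico, Finset.range_eq_Ico]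
    exact (Finset.sum_Ico_consecutive (fun i => |f i - g i|) (Nat.zero_le k) (show k ≤ k+d+1 by omega)).symm
  have e2 : ∑ i ∈ Finset.range (k+d), |f (i+1) - g i|
      = (∑ i ∈ Finset.range k, |f (i+1) - g i|) + ∑ i ∈ Finset.Ico k (k+d), |f (i+1) - g i| := by
    rw [Finset.range_eq_Ico, Finset.range_eq_Ico]
    exact (Finset.sum_Ico_consecutive (fun i => |f (i+1) - g i|) (Nat.zero_le k) (show k ≤ k+d by omega)).symm
  have habs : 2 * |f k - 1/2| = |2 * f k - 1| := by
    rw [show (2:ℝ) * f k - 1 = 2 * (f k - 1/2) by ring, abs_mul]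
    norm_num
  have t1 : |2 * f k - 1| ≤ |f k - g (k+d)| + |f k + g (k+d) - 1| := by
    rw [show (2:ℝ) * f k - 1 = (f k - g (k+d)) + (f k + g (k+d) - 1) by ring]
    exact abs_add_le _ _
  have t2 : |f k + g (k+d) - 1| ≤ |f 0 + g (k+d) - 1| + |f 0 - f k| := by
    rw [show f k + g (k+d) - 1 = (f 0 + g (k+d) - 1) - (f 0 - f k) by ring]
    exact abs_sub _ _
  linarith

private lemma chainG (N : ℕ) (hN : 0 < N) (f g : ℕ → ℝ) (k : ℕ) (hk : k < N) :
    2 * |g k - 1/2| ≤ (∑ i ∈ Finset.range N, |f i - g i|)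
      + (∑ i ∈ Finset.range (N-1), |f (i+1) - g i|) + |f 0 + g (N-1) - 1| := by
  obtain ⟨d, rfl⟩ : ∃ d, N = k + d + 1 := ⟨N - k - 1, by omega⟩
  have hsub : k + d + 1 - 1 = k + d := by omega
  rw [hsub]
  have hp1 := path1 f g k
  rw [Finset.sum_add_distrib] at hp1
  have hp3 := path3 f g k d
  have e1 : ∑ i ∈ Finset.range (k+d+1), |f i - g i|
      = ((∑ i ∈ Finset.range k, |f i - g i|) + |f k - g k|)
        + ∑ i ∈ Finset.Ico (k+1) (k+d+1), |f i - g i| := by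
    rw [Finset.range_eq_Ico, ← Finset.sum_Ico_consecutive (fun i => |f i - g i|)
      (Nat.zero_le (k+1)) (by omega : k+1 ≤ k+d+1), ← Finset.range_eq_Ico,
      Finset.sum_range_succ]
  have e2 : ∑ i ∈ Finset.range (k+d), |f (i+1) - g i|
      = (∑ i ∈ Finset.range k, |f (i+1) - g i|) + ∑ i ∈ Finset.Ico k (k+d), |f (i+1) - g i| := by
    rw [Finset.range_eq_Ico, Finset.range_eq_Ico]
    exact (Finset.sum_Ico_consecutive (fun i => |f (i+1) - g i|) (Nat.zero_le k) (show k ≤ k+d by omega)).symm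
  have habs : 2 * |g k - 1/2| = |2 * g k - 1| := by
    rw [show (2:ℝ) * g k - 1 = 2 * (g k - 1/2) by ring, abs_mul]
    norm_num
  have t1 : |2 * g k - 1| ≤ |g k + f 0 - 1| + |f 0 - g k| := by
    rw [show (2:ℝ) * g k - 1 = (g k + f 0 - 1) - (f 0 - g k) by ring]
    exact abs_sub _ _
  have t2 : |f 0 - g k| ≤ |f 0 - f k| + |f k - g k| := abs_sub_le _ _ _
  have t3 : |g k + f 0 - 1| ≤ |f 0 + g (k+d) - 1| + |g k - g (k+d)| := by
    rw [show g k + f 0 - 1 = (f 0 + g (k+d) - 1) - (g (k+d) - g k) by ring]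
    have := abs_sub (f 0 + g (k+d) - 1) (g (k+d) - g k)
    rw [abs_sub_comm (g (k+d))] at this
    exact this
  linarith

private lemma fin2_sum_ne (h : Fin 2 → Fin 2 → ℝ) : ∑ x : Fin 2, h x (1 - x) = h 0 1 + h 1 0 := by
  rw [Fin.sum_univ_two]
  norm_num

private lemma sum_chain_pairs {N : ℕ} (hN : 0 < N) (F : Fin N → Fin N → ℝ) :
    (∑ a : Fin N, ∑ b : Fin N,
        if (a : ℕ) = (b : ℕ) ∨ (a : ℕ) = (b : ℕ) + 1 then F a b else 0)
      = (∑ i ∈ Finset.range N, F (clampFin N hN i) (clampFin N hN i))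
        + ∑ i ∈ Finset.range (N - 1), F (clampFin N hN (i + 1)) (clampFin N hN i) := by
  rw [Finset.sum_comm]
  have step : ∀ b : Fin N,
      (∑ a : Fin N, if (a : ℕ) = (b : ℕ) ∨ (a : ℕ) = (b : ℕ) + 1 then F a b else 0)
        = F b b + (if (b : ℕ) + 1 < N then F (clampFin N hN ((b : ℕ) + 1)) b else 0) := by
    intro b
    have hsplit : ∀ a : Fin N,
        (if (a : ℕ) = (b : ℕ) ∨ (a : ℕ) = (b : ℕ) + 1 then F a b else 0)
          = (if a = b then F a b else 0) + (if (a : ℕ) = (b : ℕ) + 1 then F a b else 0) := by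
      intro a
      by_cases h1 : (a : ℕ) = (b : ℕ) <;> by_cases h2 : (a : ℕ) = (b : ℕ) + 1
      · omega
      · have hab : a = b := Fin.ext h1
        simp [hab, h2]
      · have hab : a ≠ b := fun h => h1 (congrArg Fin.val h)
        simp [hab, h1, h2]
      · have hab : a ≠ b := fun h => h1 (congrArg Fin.val h)
        simp [hab, h1, h2]
    rw [Finset.sum_congr rfl fun a _ => hsplit a, Finset.sum_add_distrib]
    congr 1
    · simp
    · by_cases hb : (b : ℕ) + 1 < N
      · rw [if_pos hb, Finset.sum_eq_single (clampFin N hN ((b : ℕ) + 1))]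
        · rw [if_pos (clampFin_val_of_lt hN hb)]
        · intro a _ ha
          rw [if_neg]
          intro hc
          exact ha (Fin.ext (by rw [hc, clampFin_val_of_lt hN hb]))
        · intro h
          exact absurd (Finset.mem_univ _) h
      · rw [if_neg hb]
        apply Finset.sum_eq_zero
        intro a _
        rw [if_neg]
        intro hc
        exact hb (hc ▸ a.isLt)
  rw [Finset.sum_congr rfl fun b _ => step b, Finset.sum_add_distrib]
  congr 1
  · rw [← Fin.sum_univ_eq_sum_range (fun i => F (clampFin N hN i) (clampFin N hN i)) N]
    exact Finset.sum_congr rfl fun b _ => by rw [clampFin_coe hN b]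
  · have h1 : (∑ b : Fin N, if (b : ℕ) + 1 < N then F (clampFin N hN ((b : ℕ) + 1)) b else 0)
        = ∑ i ∈ Finset.range N, (if i + 1 < N then F (clampFin N hN (i + 1)) (clampFin N hN i) else 0) := by
      rw [← Fin.sum_univ_eq_sum_range (fun i => if i + 1 < N then F (clampFin N hN (i + 1)) (clampFin N hN i) else 0) N]
      refine Finset.sum_congr rfl fun b _ => ?_
      rw [clampFin_coe hN b]
    rw [h1, Finset.range_eq_Ico,
      ← Finset.sum_Ico_consecutive (fun i => if i + 1 < N then F (clampFin N hN (i + 1)) (clampFin N hN i) else 0)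
        (Nat.zero_le (N - 1)) (show N - 1 ≤ N by omega)]
    have htop : (∑ i ∈ Finset.Ico (N - 1) N,
        if i + 1 < N then F (clampFin N hN (i + 1)) (clampFin N hN i) else 0) = 0 := by
      apply Finset.sum_eq_zero
      intro i hi
      rw [Finset.mem_Ico] at hi
      rw [if_neg (by omega)]
    rw [htop, add_zero, ← Finset.range_eq_Ico]
    refine Finset.sum_congr rfl fun i hi => ?_
    rw [Finset.mem_range] at hi
    rw [if_pos (by omega)]

private def Jq (N : ℕ) (hN : 0 < N) {U V : Type*} [Fintype U] [Fintype V]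
    (P : Fin N → Fin N → Fin 2 → Fin 2 → U → V → ℝ) (u : U) (v : V) : ℝ :=
  (∑ i ∈ Finset.range N,
      (P (clampFin N hN i) (clampFin N hN i) 0 1 u v + P (clampFin N hN i) (clampFin N hN i) 1 0 u v))
  + (∑ i ∈ Finset.range (N - 1),
      (P (clampFin N hN (i + 1)) (clampFin N hN i) 0 1 u v + P (clampFin N hN (i + 1)) (clampFin N hN i) 1 0 u v))
  + (P (clampFin N hN 0) (clampFin N hN (N - 1)) 0 0 u v + P (clampFin N hN 0) (clampFin N hN (N - 1)) 1 1 u v)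

private lemma swap_sums {U V : Type*} [Fintype U] [Fintype V] (s : Finset ℕ)
    (G : ℕ → Fin 2 → U → V → ℝ) :
    (∑ i ∈ s, ∑ x : Fin 2, ∑ u, ∑ v, G i x u v) = ∑ u, ∑ v, ∑ i ∈ s, ∑ x : Fin 2, G i x u v :=
  calc ∑ i ∈ s, ∑ x : Fin 2, ∑ u, ∑ v, G i x u v
      = ∑ i ∈ s, ∑ u, ∑ x : Fin 2, ∑ v, G i x u v :=
        Finset.sum_congr rfl fun i _ => Finset.sum_comm
    _ = ∑ u, ∑ i ∈ s, ∑ x : Fin 2, ∑ v, G i x u v := Finset.sum_comm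
    _ = ∑ u, ∑ i ∈ s, ∑ v, ∑ x : Fin 2, G i x u v :=
        Finset.sum_congr rfl fun u _ => Finset.sum_congr rfl fun i _ => Finset.sum_comm
    _ = ∑ u, ∑ v, ∑ i ∈ s, ∑ x : Fin 2, G i x u v :=
        Finset.sum_congr rfl fun u _ => Finset.sum_comm

private lemma chainedBell_eq {N : ℕ} (hN : 0 < N) {U V : Type*} [Fintype U] [Fintype V]
    (P : Fin N → Fin N → Fin 2 → Fin 2 → U → V → ℝ) :
    chainedBell N hN (fun a b x y => ∑ u, ∑ v, P a b x y u v)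
      = ∑ u, ∑ v, Jq N hN P u v := by
  have h0 : (⟨0, hN⟩ : Fin N) = clampFin N hN 0 := by
    ext; simp [clampFin]
  have hn1 : (⟨N - 1, by omega⟩ : Fin N) = clampFin N hN (N - 1) := by
    ext; simp [clampFin]
  unfold chainedBell
  rw [sum_chain_pairs hN (fun a b => ∑ x : Fin 2, ∑ u, ∑ v, P a b x (1 - x) u v), h0, hn1]
  have p1 : (∑ i ∈ Finset.range N, ∑ x : Fin 2, ∑ u, ∑ v,
        P (clampFin N hN i) (clampFin N hN i) x (1 - x) u v)
      = ∑ u, ∑ v, ∑ i ∈ Finset.range N,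
        (P (clampFin N hN i) (clampFin N hN i) 0 1 u v + P (clampFin N hN i) (clampFin N hN i) 1 0 u v) := by
    rw [swap_sums]
    exact Finset.sum_congr rfl fun u _ => Finset.sum_congr rfl fun v _ =>
      Finset.sum_congr rfl fun i _ =>
        fin2_sum_ne (fun x y => P (clampFin N hN i) (clampFin N hN i) x y u v)
  have p2 : (∑ i ∈ Finset.range (N - 1), ∑ x : Fin 2, ∑ u, ∑ v,
        P (clampFin N hN (i + 1)) (clampFin N hN i) x (1 - x) u v)
      = ∑ u, ∑ v, ∑ i ∈ Finset.range (N - 1),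
        (P (clampFin N hN (i + 1)) (clampFin N hN i) 0 1 u v
          + P (clampFin N hN (i + 1)) (clampFin N hN i) 1 0 u v) := by
    rw [swap_sums]
    exact Finset.sum_congr rfl fun u _ => Finset.sum_congr rfl fun v _ =>
      Finset.sum_congr rfl fun i _ =>
        fin2_sum_ne (fun x y => P (clampFin N hN (i + 1)) (clampFin N hN i) x y u v)
  have p3 : (∑ x : Fin 2, ∑ u, ∑ v, P (clampFin N hN 0) (clampFin N hN (N - 1)) x x u v)
      = ∑ u, ∑ v, (P (clampFin N hN 0) (clampFin N hN (N - 1)) 0 0 u v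
          + P (clampFin N hN 0) (clampFin N hN (N - 1)) 1 1 u v) := by
    rw [Finset.sum_comm]
    refine Finset.sum_congr rfl fun u _ => ?_
    rw [Finset.sum_comm]
    refine Finset.sum_congr rfl fun v _ => ?_
    exact Fin.sum_univ_two _
  rw [p1, p2, p3, ← Finset.sum_add_distrib, ← Finset.sum_add_distrib]
  refine Finset.sum_congr rfl fun u _ => ?_
  rw [← Finset.sum_add_distrib, ← Finset.sum_add_distrib]
  rfl

private lemma key_bound {N : ℕ} (hN : 0 < N) {U V : Type*} [Fintype U] [Fintype V]
    (P : Fin N → Fin N → Fin 2 → Fin 2 → U → V → ℝ) (PUV : U → V → ℝ)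
    (hPnn : ∀ a b x y u v, 0 ≤ P a b x y u v)
    (hiid : ∀ a b u v, ∑ x, ∑ y, P a b x y u v = PUV u v)
    (hlocX : ∀ a b b' u v v' x, 0 < PUV u v → 0 < PUV u v' →
      (∑ y, P a b x y u v) / PUV u v = (∑ y, P a b' x y u v') / PUV u v')
    (hlocY : ∀ a a' b u u' v y, 0 < PUV u v → 0 < PUV u' v →
      (∑ x, P a b x y u v) / PUV u v = (∑ x, P a' b x y u' v) / PUV u' v)
    (a b : Fin N) (u : U) (v : V) :
    2 * |(∑ y, P a b 0 y u v) - PUV u v / 2| ≤ Jq N hN P u v ∧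
    2 * |(∑ x, P a b x 0 u v) - PUV u v / 2| ≤ Jq N hN P u v := by
  by_cases hw : PUV u v = 0
  · have hz : ∀ (a' b' : Fin N) (x y : Fin 2), P a' b' x y u v = 0 := by
      intro a' b' x y
      have h0 : ∑ x : Fin 2, ∑ y : Fin 2, P a' b' x y u v = 0 := by
        rw [hiid a' b' u v, hw]
      have hx := (Finset.sum_eq_zero_iff_of_nonneg
        (fun x _ => Finset.sum_nonneg fun y _ => hPnn a' b' x y u v)).mp h0 x (Finset.mem_univ x)
      exact (Finset.sum_eq_zero_iff_of_nonneg
        (fun y _ => hPnn a' b' x y u v)).mp hx y (Finset.mem_univ y)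
    constructor <;> simp [Jq, hz, hw]
  · have hw0 : 0 < PUV u v := by
      have : 0 ≤ PUV u v := by
        rw [← hiid a b u v]
        exact Finset.sum_nonneg fun x _ => Finset.sum_nonneg fun y _ => hPnn a b x y u v
      exact lt_of_le_of_ne this (Ne.symm hw)
    obtain ⟨f, hfdef⟩ : ∃ f : ℕ → ℝ,
        f = fun i => (∑ y, P (clampFin N hN i) b 0 y u v) / PUV u v := ⟨_, rfl⟩
    obtain ⟨g, hgdef⟩ : ∃ g : ℕ → ℝ,
        g = fun j => (∑ x, P a (clampFin N hN j) x 0 u v) / PUV u v := ⟨_, rfl⟩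
    -- pointwise bounds
    have h1 : ∀ i : ℕ, |f i - g i| ≤
        (P (clampFin N hN i) (clampFin N hN i) 0 1 u v
          + P (clampFin N hN i) (clampFin N hN i) 1 0 u v) / PUV u v := by
      intro i
      have hx := hlocX (clampFin N hN i) b (clampFin N hN i) u v v 0 hw0 hw0
      have hy := hlocY a (clampFin N hN i) (clampFin N hN i) u u v 0 hw0 hw0
      rw [hfdef, hgdef]
      simp only
      rw [hx, hy, div_sub_div_same, abs_div, abs_of_pos hw0]
      gcongr
      have hX := Fin.sum_univ_two (fun y => P (clampFin N hN i) (clampFin N hN i) 0 y u v)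
      have hY := Fin.sum_univ_two (fun x => P (clampFin N hN i) (clampFin N hN i) x 0 u v)
      rw [hX, hY]
      have n1 := hPnn (clampFin N hN i) (clampFin N hN i) 0 1 u v
      have n2 := hPnn (clampFin N hN i) (clampFin N hN i) 1 0 u v
      rw [abs_le]
      constructor <;> [skip; skip] <;> linarith
    have h2 : ∀ i : ℕ, |f (i + 1) - g i| ≤
        (P (clampFin N hN (i + 1)) (clampFin N hN i) 0 1 u v
          + P (clampFin N hN (i + 1)) (clampFin N hN i) 1 0 u v) / PUV u v := by
      intro i
      have hx := hlocX (clampFin N hN (i + 1)) b (clampFin N hN i) u v v 0 hw0 hw0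
      have hy := hlocY a (clampFin N hN (i + 1)) (clampFin N hN i) u u v 0 hw0 hw0
      rw [hfdef, hgdef]
      simp only
      rw [hx, hy, div_sub_div_same, abs_div, abs_of_pos hw0]
      gcongr
      have hX := Fin.sum_univ_two (fun y => P (clampFin N hN (i + 1)) (clampFin N hN i) 0 y u v)
      have hY := Fin.sum_univ_two (fun x => P (clampFin N hN (i + 1)) (clampFin N hN i) x 0 u v)
      rw [hX, hY]
      have n1 := hPnn (clampFin N hN (i + 1)) (clampFin N hN i) 0 1 u v
      have n2 := hPnn (clampFin N hN (i + 1)) (clampFin N hN i) 1 0 u v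
      rw [abs_le]
      constructor <;> linarith
    have h3 : |f 0 + g (N - 1) - 1| ≤
        (P (clampFin N hN 0) (clampFin N hN (N - 1)) 0 0 u v
          + P (clampFin N hN 0) (clampFin N hN (N - 1)) 1 1 u v) / PUV u v := by
      have hx := hlocX (clampFin N hN 0) b (clampFin N hN (N - 1)) u v v 0 hw0 hw0
      have hy := hlocY a (clampFin N hN 0) (clampFin N hN (N - 1)) u u v 0 hw0 hw0
      have hone : (1 : ℝ) = (∑ x, ∑ y, P (clampFin N hN 0) (clampFin N hN (N - 1)) x y u v) / PUV u v := by
        rw [hiid, div_self hw]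
      rw [hfdef, hgdef]
      simp only
      rw [hx, hy, hone, ← add_div, div_sub_div_same, abs_div, abs_of_pos hw0]
      gcongr
      have hX := Fin.sum_univ_two (fun y => P (clampFin N hN 0) (clampFin N hN (N - 1)) 0 y u v)
      have hY := Fin.sum_univ_two (fun x => P (clampFin N hN 0) (clampFin N hN (N - 1)) x 0 u v)
      have hS := Fin.sum_univ_two (fun x => ∑ y, P (clampFin N hN 0) (clampFin N hN (N - 1)) x y u v)
      have hS0 := Fin.sum_univ_two (fun y => P (clampFin N hN 0) (clampFin N hN (N - 1)) 0 y u v)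
      have hS1 := Fin.sum_univ_two (fun y => P (clampFin N hN 0) (clampFin N hN (N - 1)) 1 y u v)
      rw [hX, hY, hS, hS0, hS1]
      have n1 := hPnn (clampFin N hN 0) (clampFin N hN (N - 1)) 0 0 u v
      have n2 := hPnn (clampFin N hN 0) (clampFin N hN (N - 1)) 1 1 u v
      rw [abs_le]
      constructor <;> linarith
    -- bound the chain sum by Jq / PUV
    have hS : (∑ i ∈ Finset.range N, |f i - g i|)
        + (∑ i ∈ Finset.range (N - 1), |f (i + 1) - g i|) + |f 0 + g (N - 1) - 1|
        ≤ Jq N hN P u v / PUV u v := by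
      have e : Jq N hN P u v / PUV u v =
          (∑ i ∈ Finset.range N,
            (P (clampFin N hN i) (clampFin N hN i) 0 1 u v
              + P (clampFin N hN i) (clampFin N hN i) 1 0 u v) / PUV u v)
          + (∑ i ∈ Finset.range (N - 1),
            (P (clampFin N hN (i + 1)) (clampFin N hN i) 0 1 u v
              + P (clampFin N hN (i + 1)) (clampFin N hN i) 1 0 u v) / PUV u v)
          + (P (clampFin N hN 0) (clampFin N hN (N - 1)) 0 0 u v
              + P (clampFin N hN 0) (clampFin N hN (N - 1)) 1 1 u v) / PUV u v := by
        simp only [Jq]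
        rw [add_div, add_div, Finset.sum_div, Finset.sum_div]
      rw [e]
      refine add_le_add (add_le_add ?_ ?_) h3
      · exact Finset.sum_le_sum fun i _ => h1 i
      · exact Finset.sum_le_sum fun i _ => h2 i
    constructor
    · have hfa : (∑ y, P a b 0 y u v) = f (a : ℕ) * PUV u v := by
        rw [hfdef]
        simp only
        rw [clampFin_coe hN a]
        field_simp
      calc 2 * |(∑ y, P a b 0 y u v) - PUV u v / 2|
          = PUV u v * (2 * |f (a : ℕ) - 1 / 2|) := by
            rw [hfa, show f (a : ℕ) * PUV u v - PUV u v / 2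
              = PUV u v * (f (a : ℕ) - 1 / 2) by ring, abs_mul, abs_of_pos hw0]
            ring
        _ ≤ PUV u v * (Jq N hN P u v / PUV u v) :=
            mul_le_mul_of_nonneg_left (le_trans (chainF N hN f g (a : ℕ) a.isLt) hS) hw0.le
        _ = Jq N hN P u v := by field_simp
    · have hgb : (∑ x, P a b x 0 u v) = g (b : ℕ) * PUV u v := by
        rw [hgdef]
        simp only
        rw [clampFin_coe hN b]
        field_simp
      calc 2 * |(∑ x, P a b x 0 u v) - PUV u v / 2|
          = PUV u v * (2 * |g (b : ℕ) - 1 / 2|) := by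
            rw [hgb, show g (b : ℕ) * PUV u v - PUV u v / 2
              = PUV u v * (g (b : ℕ) - 1 / 2) by ring, abs_mul, abs_of_pos hw0]
            ring
        _ ≤ PUV u v * (Jq N hN P u v / PUV u v) :=
            mul_le_mul_of_nonneg_left (le_trans (chainG N hN f g (b : ℕ) b.isLt) hS) hw0.le
        _ = Jq N hN P u v := by field_simp

/-- a hidden variable model `P (a,b) (x,y,u,v)` with local hidden variables
`u : U`, `v : V` such that (i) the hidden variables are independent of the inputs
(their marginal is a fixed `PUV`), and (ii) the conditional distribution of `X` given
`(a,b,u,v)` (defined whenever `PUV u v > 0`) depends only on `(a,u)`, and that of `Y` only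
on `(b,v)`.  Then the joint distribution of `(X,U)` given `A = a` is within statistical
distance `I_N / 2` of `U_X × P_U` (which assigns `P_U(u)/2` to each `(x,u)`), and
symmetrically for `(Y,V)` given `B = b`, where `I_N` is the chained Bell quantity of the
bipartite marginal `P_{XY|AB}`. -/
theorem hidden_variable_local_part_trivial (N : ℕ) (hN : 0 < N)
    {U V : Type*} [Fintype U] [Fintype V]
    (P : Fin N → Fin N → Fin 2 → Fin 2 → U → V → ℝ) (PUV : U → V → ℝ)
    (hprob : ∀ a b,
      IsProbDist (fun q : (Fin 2 × Fin 2) × U × V => P a b q.1.1 q.1.2 q.2.1 q.2.2))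
    -- (i) hidden variables are independent of the inputs
    (hiid : ∀ a b u v, ∑ x, ∑ y, P a b x y u v = PUV u v)
    -- (ii) the conditional marginal of X depends only on (a, u) ...
    (hlocX : ∀ a b b' u v v' x, 0 < PUV u v → 0 < PUV u v' →
      (∑ y, P a b x y u v) / PUV u v = (∑ y, P a b' x y u v') / PUV u v')
    -- ... and that of Y only on (b, v)
    (hlocY : ∀ a a' b u u' v y, 0 < PUV u v → 0 < PUV u' v →
      (∑ x, P a b x y u v) / PUV u v = (∑ x, P a' b x y u' v) / PUV u' v) :
    (∀ a b, statDist
        (fun p : Fin 2 × U => ∑ v, ∑ y, P a b p.1 y p.2 v)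
        (fun p : Fin 2 × U => (∑ v, PUV p.2 v) / 2)
      ≤ chainedBell N hN (fun a b x y => ∑ u, ∑ v, P a b x y u v) / 2) ∧
    (∀ a b, statDist
        (fun p : Fin 2 × V => ∑ u, ∑ x, P a b x p.1 u p.2)
        (fun p : Fin 2 × V => (∑ u, PUV u p.2) / 2)
      ≤ chainedBell N hN (fun a b x y => ∑ u, ∑ v, P a b x y u v) / 2) := by
  have hPnn : ∀ a b x y u v, 0 ≤ P a b x y u v := fun a b x y u v => (hprob a b).1 ((x, y), (u, v))
  have hCB : chainedBell N hN (fun a b x y => ∑ u, ∑ v, P a b x y u v)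
      = ∑ u, ∑ v, Jq N hN P u v := chainedBell_eq hN P
  constructor
  · intro a b
    have hkey : ∀ u v, 2 * |(∑ y, P a b 0 y u v) - PUV u v / 2| ≤ Jq N hN P u v :=
      fun u v => (key_bound hN P PUV hPnn hiid hlocX hlocY a b u v).1
    rw [hCB]
    simp only [statDist]
    have main : (∑ p : Fin 2 × U, |(∑ v, ∑ y, P a b p.1 y p.2 v) - (∑ v, PUV p.2 v) / 2|)
        ≤ ∑ u, ∑ v, Jq N hN P u v := by
      simp only [Fintype.sum_prod_type]
      rw [Fin.sum_univ_two (fun x => ∑ u, |(∑ v, ∑ y, P a b x y u v) - (∑ v, PUV u v) / 2|),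
        ← Finset.sum_add_distrib]
      apply Finset.sum_le_sum
      intro u _
      have hM : (∑ v, ∑ y, P a b 0 y u v) + (∑ v, ∑ y, P a b 1 y u v) = ∑ v, PUV u v := by
        rw [← Finset.sum_add_distrib]
        refine Finset.sum_congr rfl fun v _ => ?_
        rw [← hiid a b u v]
        exact (Fin.sum_univ_two (fun x => ∑ y, P a b x y u v)).symm
      have hneg : |(∑ v, ∑ y, P a b 1 y u v) - (∑ v, PUV u v) / 2|
          = |(∑ v, ∑ y, P a b 0 y u v) - (∑ v, PUV u v) / 2| := by
        rw [show (∑ v, ∑ y, P a b 1 y u v) - (∑ v, PUV u v) / 2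
          = -((∑ v, ∑ y, P a b 0 y u v) - (∑ v, PUV u v) / 2) by linarith, abs_neg]
      have hsplit : (∑ v, ∑ y, P a b 0 y u v) - (∑ v, PUV u v) / 2
          = ∑ v, ((∑ y, P a b 0 y u v) - PUV u v / 2) := by
        rw [Finset.sum_sub_distrib, ← Finset.sum_div]
      calc |(∑ v, ∑ y, P a b 0 y u v) - (∑ v, PUV u v) / 2|
            + |(∑ v, ∑ y, P a b 1 y u v) - (∑ v, PUV u v) / 2|
          = 2 * |∑ v, ((∑ y, P a b 0 y u v) - PUV u v / 2)| := by
            rw [hneg, hsplit]; ring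
        _ ≤ 2 * ∑ v, |(∑ y, P a b 0 y u v) - PUV u v / 2| := by
            have := Finset.abs_sum_le_sum_abs
              (fun v => (∑ y, P a b 0 y u v) - PUV u v / 2) Finset.univ
            linarith
        _ = ∑ v, 2 * |(∑ y, P a b 0 y u v) - PUV u v / 2| := Finset.mul_sum _ _ _
        _ ≤ ∑ v, Jq N hN P u v := Finset.sum_le_sum fun v _ => hkey u v
    linarith
  · intro a b
    have hkey : ∀ u v, 2 * |(∑ x, P a b x 0 u v) - PUV u v / 2| ≤ Jq N hN P u v :=
      fun u v => (key_bound hN P PUV hPnn hiid hlocX hlocY a b u v).2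
    rw [hCB]
    simp only [statDist]
    have main : (∑ p : Fin 2 × V, |(∑ u, ∑ x, P a b x p.1 u p.2) - (∑ u, PUV u p.2) / 2|)
        ≤ ∑ u, ∑ v, Jq N hN P u v := by
      refine le_trans ?_ (le_of_eq (Finset.sum_comm (f := fun v u => Jq N hN P u v)))
      simp only [Fintype.sum_prod_type]
      rw [Fin.sum_univ_two (fun y => ∑ v, |(∑ u, ∑ x, P a b x y u v) - (∑ u, PUV u v) / 2|),
        ← Finset.sum_add_distrib]
      apply Finset.sum_le_sum
      intro v _
      have hM : (∑ u, ∑ x, P a b x 0 u v) + (∑ u, ∑ x, P a b x 1 u v) = ∑ u, PUV u v := by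
        rw [← Finset.sum_add_distrib]
        refine Finset.sum_congr rfl fun u _ => ?_
        rw [← hiid a b u v, ← Finset.sum_add_distrib]
        exact Finset.sum_congr rfl fun x _ => (Fin.sum_univ_two (fun y => P a b x y u v)).symm
      have hneg : |(∑ u, ∑ x, P a b x 1 u v) - (∑ u, PUV u v) / 2|
          = |(∑ u, ∑ x, P a b x 0 u v) - (∑ u, PUV u v) / 2| := by
        rw [show (∑ u, ∑ x, P a b x 1 u v) - (∑ u, PUV u v) / 2
          = -((∑ u, ∑ x, P a b x 0 u v) - (∑ u, PUV u v) / 2) by linarith, abs_neg]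
      have hsplit : (∑ u, ∑ x, P a b x 0 u v) - (∑ u, PUV u v) / 2
          = ∑ u, ((∑ x, P a b x 0 u v) - PUV u v / 2) := by
        rw [Finset.sum_sub_distrib, ← Finset.sum_div]
      calc |(∑ u, ∑ x, P a b x 0 u v) - (∑ u, PUV u v) / 2|
            + |(∑ u, ∑ x, P a b x 1 u v) - (∑ u, PUV u v) / 2|
          = 2 * |∑ u, ((∑ x, P a b x 0 u v) - PUV u v / 2)| := by
            rw [hneg, hsplit]; ring
        _ ≤ 2 * ∑ u, |(∑ x, P a b x 0 u v) - PUV u v / 2| := by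
            have := Finset.abs_sum_le_sum_abs
              (fun u => (∑ x, P a b x 0 u v) - PUV u v / 2) Finset.univ
            linarith
        _ = ∑ u, 2 * |(∑ x, P a b x 0 u v) - PUV u v / 2| := Finset.mul_sum _ _ _
        _ ≤ ∑ u, Jq N hN P u v := Finset.sum_le_sum fun u _ => hkey u v
    linarith

end
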